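/- Fix β ∈ ℝ, let h₁(ζ) = ζ + β − e^{β+ζ−1} and h₂(ζ) = (β e^{1−β} + e^{β−1})ζ − e^{1−β} − (1−β)e^{β−1} + (β²−β+1)e^ζ. Then lim_{ζ→1−β} |h₁(ζ)|^{1/2}/|h₂(ζ)| = 1/(√2·(e^{β−1} + (β²+1)e^{1−β})), and this limit is positive. In particular there exist C > 0 and ε > 0 such that |h₁(ζ)|^{1/2} ≥ C|h₂(ζ)| whenever |ζ − (1−β)| ≤ ε. -/

import Mathlib

open Real Filter Topology

-- key limit: (exp t - 1 - t)/t^2 → 1/2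
lemma key_lim : Filter.Tendsto (fun t : ℝ => (Real.exp t - 1 - t) / t ^ 2)
    (nhdsWithin (0:ℝ) {(0:ℝ)}ᶜ) (nhds (1/2)) := by
  have h : ∀ᶠ t : ℝ in nhdsWithin (0:ℝ) {(0:ℝ)}ᶜ,
      ‖(Real.exp t - 1 - t) / t ^ 2 - 1/2‖ ≤ |t| := by
    filter_upwards [self_mem_nhdsWithin,
      eventually_nhdsWithin_of_eventually_nhds (Metric.eventually_nhds_iff.2
        ⟨1, one_pos, fun {t} ht => le_of_lt (by simpa [Real.dist_eq] using ht)⟩)] with t ht h1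
    have ht0 : t ≠ 0 := ht
    have ht2 : (0:ℝ) < t ^ 2 := by positivity
    have hb := Real.exp_bound (x := t) h1 (n := 3) (by norm_num)
    have hsum : ∑ m ∈ Finset.range 3, t ^ m / (Nat.factorial m) = 1 + t + t^2/2 := by
      simp [Finset.sum_range_succ, Nat.factorial]
    rw [hsum] at hb
    have : (Real.exp t - 1 - t) / t ^ 2 - 1/2 = (Real.exp t - (1 + t + t^2/2)) / t^2 := by
      field_simp; ring
    rw [this, Real.norm_eq_abs, abs_div, abs_pow, sq_abs]
    calc |Real.exp t - (1 + t + t^2/2)| / t^2 ≤ |t|^3 * (4/(6*3)) / t^2 := by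
          apply div_le_div_of_nonneg_right ?_ ht2.le
          · exact hb.trans_eq (by norm_num [Nat.factorial])
      _ ≤ |t| := by
          rw [div_le_iff₀ ht2]
          calc |t|^3 * (4/(6*3)) ≤ |t|^3 * 1 := by
                apply mul_le_mul_of_nonneg_left (by norm_num) (by positivity)
            _ = |t| * t^2 := by rw [mul_one, ← sq_abs]; ring
  have h2 : Filter.Tendsto (fun t : ℝ => |t|) (nhdsWithin (0:ℝ) {(0:ℝ)}ᶜ) (nhds 0) := by
    have h0 : Filter.Tendsto (fun t : ℝ => |t|) (nhds (0:ℝ)) (nhds |(0:ℝ)|) :=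
      continuous_abs.tendsto (0:ℝ)
    simpa using h0.mono_left (nhdsWithin_le_nhds (s := {(0:ℝ)}ᶜ))
  have h3 := squeeze_zero_norm' h h2
  have := h3.add_const (1/2)
  simpa using this

theorem h1_h2_ratio_limit (β : ℝ) (h₁ h₂ : ℝ → ℝ)
    (hh₁ : h₁ = fun ζ => ζ + β - Real.exp (β + ζ - 1))
    (hh₂ : h₂ = fun ζ => (β * Real.exp (1 - β) + Real.exp (β - 1)) * ζ -
      Real.exp (1 - β) - (1 - β) * Real.exp (β - 1) + (β ^ 2 - β + 1) * Real.exp ζ) :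
    Filter.Tendsto (fun ζ => Real.sqrt |h₁ ζ| / |h₂ ζ|) (nhdsWithin (1 - β) {1 - β}ᶜ)
      (nhds (1 / (Real.sqrt 2 * (Real.exp (β - 1) + (β ^ 2 + 1) * Real.exp (1 - β))))) ∧
    0 < 1 / (Real.sqrt 2 * (Real.exp (β - 1) + (β ^ 2 + 1) * Real.exp (1 - β))) ∧
    ∃ C ε : ℝ, 0 < C ∧ 0 < ε ∧ ∀ ζ : ℝ, |ζ - (1 - β)| ≤ ε →
      C * |h₂ ζ| ≤ Real.sqrt |h₁ ζ| := by
  set A : ℝ := β * Real.exp (1 - β) + Real.exp (β - 1) with hA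
  set B : ℝ := (β ^ 2 - β + 1) * Real.exp (1 - β) with hB
  set D : ℝ := Real.exp (β - 1) + (β ^ 2 + 1) * Real.exp (1 - β) with hD
  have hDpos : 0 < D := by
    have := Real.exp_pos (β - 1); have := Real.exp_pos (1 - β); nlinarith [sq_nonneg β]
  have hABD : A + B = D := by rw [hA, hB, hD]; ring
  -- rewrite h₁, h₂ in terms of t = ζ - (1 - β)
  have hf1 : ∀ ζ : ℝ, |h₁ ζ| = Real.exp (ζ - (1 - β)) - 1 - (ζ - (1 - β)) := by
    intro ζ
    have hnn : 0 ≤ Real.exp (ζ - (1 - β)) - 1 - (ζ - (1 - β)) := by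
      have := Real.add_one_le_exp (ζ - (1 - β)); linarith
    have : h₁ ζ = -(Real.exp (ζ - (1 - β)) - 1 - (ζ - (1 - β))) := by
      rw [hh₁]; simp only
      rw [show β + ζ - 1 = ζ - (1 - β) by ring]; ring
    rw [this, abs_neg, abs_of_nonneg hnn]
  have hf2 : ∀ ζ : ℝ, h₂ ζ = A * (ζ - (1 - β)) + B * (Real.exp (ζ - (1 - β)) - 1) := by
    intro ζ
    rw [hh₂]; simp only
    rw [show ζ = (ζ - (1 - β)) + (1 - β) by ring, Real.exp_add]
    ring_nf
    rw [hA, hB]; ring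
  -- limit of sqrt part
  have hnn : ∀ t : ℝ, 0 ≤ Real.exp t - 1 - t := by
    intro t; have := Real.add_one_le_exp t; linarith
  have hsq : Filter.Tendsto (fun t : ℝ => Real.sqrt (Real.exp t - 1 - t) / |t|)
      (nhdsWithin (0:ℝ) {(0:ℝ)}ᶜ) (nhds (1 / Real.sqrt 2)) := by
    have := (Real.continuous_sqrt.tendsto (1/2)).comp key_lim
    have heq : ∀ᶠ t : ℝ in nhdsWithin (0:ℝ) {(0:ℝ)}ᶜ,
        Real.sqrt ((Real.exp t - 1 - t) / t ^ 2) = Real.sqrt (Real.exp t - 1 - t) / |t| := by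
      filter_upwards [self_mem_nhdsWithin] with t ht
      rw [Real.sqrt_div (hnn t), show (t:ℝ)^2 = t*t by ring, Real.sqrt_mul_self_eq_abs]
    have h15 : Real.sqrt (1/2) = 1 / Real.sqrt 2 := by
      rw [one_div, one_div, Real.sqrt_inv]
    exact h15 ▸ (this.congr' heq)
  -- limit of h₂ part
  have hg : Filter.Tendsto (fun t : ℝ => |A * t + B * (Real.exp t - 1)| / |t|)
      (nhdsWithin (0:ℝ) {(0:ℝ)}ᶜ) (nhds D) := by
    have hd : HasDerivAt (fun t : ℝ => A * t + B * (Real.exp t - 1)) (A + B) 0 := by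
      have h1 : HasDerivAt (fun t : ℝ => A * t) (A * 1) 0 := (hasDerivAt_id 0).const_mul A
      have h2 : HasDerivAt (fun t : ℝ => B * (Real.exp t - 1)) (B * Real.exp 0) 0 :=
        ((Real.hasDerivAt_exp 0).sub_const 1).const_mul B
      have h3 := h1.add h2
      simp only [mul_one, Real.exp_zero] at h3
      exact h3
    have hslope := hasDerivAt_iff_tendsto_slope.1 hd
    have habs := (continuous_abs.tendsto (A + B)).comp hslope
    rw [hABD] at habs
    have heq : ∀ t : ℝ, |slope (fun t : ℝ => A * t + B * (Real.exp t - 1)) 0 t|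
        = |A * t + B * (Real.exp t - 1)| / |t| := by
      intro t; rw [slope_def_field]; simp [div_eq_div_iff, abs_div]
    have hDabs : |D| = D := abs_of_pos hDpos
    exact hDabs ▸ (habs.congr (fun t => heq t))
  -- combined limit at 0
  have hratio : Filter.Tendsto
      (fun t : ℝ => Real.sqrt (Real.exp t - 1 - t) / |A * t + B * (Real.exp t - 1)|)
      (nhdsWithin (0:ℝ) {(0:ℝ)}ᶜ) (nhds (1 / (Real.sqrt 2 * D))) := by
    have := hsq.div hg hDpos.ne'
    have heq : ∀ᶠ t : ℝ in nhdsWithin (0:ℝ) {(0:ℝ)}ᶜ,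
        (Real.sqrt (Real.exp t - 1 - t) / |t|) / (|A * t + B * (Real.exp t - 1)| / |t|)
        = Real.sqrt (Real.exp t - 1 - t) / |A * t + B * (Real.exp t - 1)| := by
      filter_upwards [self_mem_nhdsWithin] with t ht
      have ht0 : |t| ≠ 0 := fun h => ht (abs_eq_zero.1 h)
      rcases eq_or_ne (|A * t + B * (Real.exp t - 1)|) 0 with hz | hz
      · simp [hz]
      · field_simp
    have hval : (1 / Real.sqrt 2) / D = 1 / (Real.sqrt 2 * D) := by rw [div_div]
    exact hval ▸ (this.congr' heq)
  -- change of variables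
  have hmap : Filter.Tendsto (fun ζ : ℝ => ζ - (1 - β)) (nhdsWithin (1 - β) {1 - β}ᶜ)
      (nhdsWithin (0:ℝ) {(0:ℝ)}ᶜ) := by
    apply tendsto_nhdsWithin_of_tendsto_nhds_of_eventually_within
    · have : Filter.Tendsto (fun ζ : ℝ => ζ - (1 - β)) (nhds (1 - β)) (nhds 0) := by
        have h0 := ((continuous_id (X := ℝ)).sub (continuous_const (y := 1 - β))).tendsto (1 - β)
        convert h0 using 2 <;> simp
      exact this.mono_left nhdsWithin_le_nhds
    · filter_upwards [self_mem_nhdsWithin] with ζ hζ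
      simp only [Set.mem_compl_iff, Set.mem_singleton_iff] at hζ ⊢
      intro h; exact hζ (by linarith [sub_eq_zero.1 h])
  have hmain : Filter.Tendsto (fun ζ => Real.sqrt |h₁ ζ| / |h₂ ζ|)
      (nhdsWithin (1 - β) {1 - β}ᶜ) (nhds (1 / (Real.sqrt 2 * D))) := by
    have := hratio.comp hmap
    apply this.congr
    intro ζ
    simp only [Function.comp_apply]
    rw [hf1 ζ, hf2 ζ]
  refine ⟨hmain, by positivity, ?_⟩
  -- part 3
  set L : ℝ := 1 / (Real.sqrt 2 * D) with hL
  have hLpos : 0 < L := by positivity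
  have hev : ∀ᶠ ζ in nhdsWithin (1 - β) {1 - β}ᶜ, L / 2 < Real.sqrt |h₁ ζ| / |h₂ ζ| :=
    hmain.eventually (eventually_gt_nhds (half_lt_self hLpos))
  rw [eventually_nhdsWithin_iff, Metric.eventually_nhds_iff] at hev
  obtain ⟨ε, hε, hball⟩ := hev
  refine ⟨L / 2, ε / 2, half_pos hLpos, half_pos hε, fun ζ hζ => ?_⟩
  rcases eq_or_ne ζ (1 - β) with rfl | hne
  · have : h₂ (1 - β) = 0 := by rw [hf2]; simp
    rw [this]; simp [Real.sqrt_nonneg]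
  · have hd : dist ζ (1 - β) < ε := by
      rw [Real.dist_eq]; linarith
    have := hball hd (by simpa [Set.mem_compl_iff] using hne)
    rcases eq_or_ne (|h₂ ζ|) 0 with hz | hz
    · rw [hz]; simp [Real.sqrt_nonneg]
    · have hpos : 0 < |h₂ ζ| := lt_of_le_of_ne (abs_nonneg _) (Ne.symm hz)
      rw [lt_div_iff₀ hpos] at this
      linarith
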